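/- arXiv:0805.3529 — 4 statements merged into one kernel-verified Lean document; each statement's English description precedes it below -/
import Mathlib

section
/- For every integer n ≥ 1 and every real univariate polynomial f of degree at most 2n−1, the Gauss–Chebyshev quadrature formula is exact: ∫_{−1}^{1} f(x) w(x) dx = (1/n) Σ_{k=1}^{n} f(cos((2k−1)π/(2n))). -/
open Real MeasureTheory

lemma cos_pow_expand (θ : ℝ) (p : ℕ) :
    Real.cos θ ^ p = (1/2^p) * ∑ j ∈ Finset.range (p+1),
      (p.choose j : ℝ) * Real.cos ((2*(j:ℝ) - p) * θ) := by
  have key : ((2 * Real.cos θ : ℝ) : ℂ) ^ p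
      = ∑ j ∈ Finset.range (p+1), (p.choose j : ℂ) *
          Complex.exp (((2*(j:ℝ) - p) * θ : ℝ) * Complex.I) := by
    have h2 : ((2 * Real.cos θ : ℝ) : ℂ)
        = Complex.exp (θ * Complex.I) + Complex.exp (-θ * Complex.I) := by
      push_cast [Complex.ofReal_cos]
      rw [Complex.cos]
      ring_nf
    rw [h2]
    have hfac : Complex.exp (θ * Complex.I) + Complex.exp (-θ * Complex.I)
        = Complex.exp (-θ * Complex.I) * (Complex.exp (2*θ * Complex.I) + 1) := by
      rw [mul_add, ← Complex.exp_add, mul_one]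
      ring_nf
    rw [hfac, mul_pow, add_pow]
    rw [Finset.mul_sum]
    refine Finset.sum_congr rfl fun j hj => ?_
    rw [one_pow, mul_one, ← Complex.exp_nat_mul, ← Complex.exp_nat_mul, mul_comm
      (Complex.exp (↑j * (2 * ↑θ * Complex.I))) ((p.choose j : ℂ)), ← mul_assoc,
      mul_comm (Complex.exp (↑p * (-↑θ * Complex.I))) ((p.choose j : ℂ)), mul_assoc,
      ← Complex.exp_add]
    have : (↑p * (-↑θ * Complex.I) + ↑j * (2 * ↑θ * Complex.I))
        = ((2*(j:ℝ) - p) * θ : ℝ) * Complex.I := by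
      push_cast; ring
    rw [this]
  have := congrArg Complex.re key
  simp only [← Complex.ofReal_pow, Complex.ofReal_re, Complex.re_sum] at this
  rw [mul_pow] at this
  have h3 : ∀ j ∈ Finset.range (p+1),
      ((p.choose j : ℂ) * Complex.exp (((2*(j:ℝ) - p) * θ : ℝ) * Complex.I)).re
      = (p.choose j : ℝ) * Real.cos ((2*(j:ℝ) - p) * θ) := by
    intro j _
    rw [show (p.choose j : ℂ) = ((p.choose j : ℝ) : ℂ) by push_cast; rfl]
    rw [Complex.re_ofReal_mul, Complex.exp_ofReal_mul_I_re]
  rw [Finset.sum_congr rfl h3] at this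
  have h2p : (0:ℝ) < 2^p := by positivity
  field_simp
  linarith [this]

lemma sum_cos_nodes (n : ℕ) (hn : 1 ≤ n) (c : ℤ) (hc : c ≠ 0) (hlt : |c| < 2*n) :
    ∑ k ∈ Finset.Icc 1 n, Real.cos ((c:ℝ) * ((2*(k:ℝ) - 1) * π / (2*n))) = 0 := by
  set s : ℝ := (c:ℝ) * π / (2*n) with hs
  have hn0 : (0:ℝ) < (n:ℝ) := by exact_mod_cast hn
  have hpi : π ≠ 0 := Real.pi_ne_zero
  have hsne : Real.sin s ≠ 0 := by
    intro h
    rw [Real.sin_eq_zero_iff] at h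
    obtain ⟨m, hm⟩ := h
    have h1 : ((m:ℝ) * (2*n)) * π = (c:ℝ) * π := by
      rw [hs] at hm
      field_simp at hm
      linear_combination π * hm
    have h2 : (m:ℝ) * (2*n) = (c:ℝ) := mul_right_cancel₀ hpi h1
    have hcm : c = 2*n*m := by exact_mod_cast (by linarith [h2] : (c:ℝ) = 2*n*m)
    rcases eq_or_ne m 0 with rfl | hm0
    · simp at hcm; omega
    · have hm1 : (1:ℤ) ≤ |m| := Int.one_le_abs hm0
      have : 2*(n:ℤ) * 1 ≤ 2*n*|m| :=
        mul_le_mul_of_nonneg_left hm1 (by positivity)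
      have habs : |c| = 2*n*|m| := by
        rw [hcm, abs_mul, abs_of_nonneg (by positivity : (0:ℤ) ≤ 2*(n:ℤ))]
      have h2' : (|c| : ℤ) < 2*n := by exact_mod_cast hlt
      omega
  have key : ∀ k : ℕ, 2 * Real.sin s * Real.cos ((2*(k:ℝ)+1) * s)
      = Real.sin ((2*(k:ℝ)+2)*s) - Real.sin ((2*(k:ℝ))*s) := by
    intro k
    have h1 : (2*(k:ℝ)+2)*s = (2*(k:ℝ)+1)*s + s := by ring
    have h2 : (2*(k:ℝ))*s = (2*(k:ℝ)+1)*s - s := by ring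
    rw [h1, h2, Real.sin_add, Real.sin_sub]
    ring
  have harg : ∀ k : ℕ, (c:ℝ) * ((2*(k:ℝ) - 1) * π / (2*n)) = (2*(k:ℝ)-1) * s := by
    intro k; rw [hs]; field_simp
  have hIcc : Finset.Icc 1 n = Finset.Ico 1 (n+1) := rfl
  rw [hIcc, Finset.sum_congr rfl (fun k _ => by rw [harg k]), Finset.sum_Ico_eq_sum_range]
  simp only [Nat.add_sub_cancel]
  set g : ℕ → ℝ := fun i => Real.sin ((2*(i:ℝ))*s) with hg
  have h2s : (2 * Real.sin s) * ∑ i ∈ Finset.range n, Real.cos ((2*((1+i:ℕ):ℝ)-1)*s)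
      = ∑ i ∈ Finset.range n, (g (i+1) - g i) := by
    rw [Finset.mul_sum]
    refine Finset.sum_congr rfl fun i _ => ?_
    have := key i
    have harg2 : (2*((1+i:ℕ):ℝ)-1) = (2*(i:ℝ)+1) := by push_cast; ring
    rw [harg2, this, hg]
    push_cast
    ring_nf
  have htel : ∑ i ∈ Finset.range n, (g (i+1) - g i) = g n - g 0 :=
    Finset.sum_range_sub g n
  have hfin : g n = 0 := by
    have : (2*(n:ℝ))*s = (c:ℝ) * π := by rw [hs]; field_simp
    rw [hg]; simp only []
    rw [this]
    exact_mod_cast Real.sin_int_mul_pi c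
  have hg0 : g 0 = 0 := by simp [hg]
  have hzero : (2 * Real.sin s) * ∑ i ∈ Finset.range n, Real.cos ((2*((1+i:ℕ):ℝ)-1)*s) = 0 := by
    rw [h2s, htel, hfin, hg0]; ring
  have h2sne : 2 * Real.sin s ≠ 0 := by simp [hsne]
  exact (mul_eq_zero.mp hzero).resolve_left h2sne

lemma integral_cos_int (c : ℤ) (hc : c ≠ 0) :
    ∫ θ in Set.Ioo (0:ℝ) π, Real.cos ((c:ℝ)*θ) = 0 := by
  rw [← MeasureTheory.integral_Ioc_eq_integral_Ioo,
    ← intervalIntegral.integral_of_le Real.pi_nonneg]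
  have hc0 : (c:ℝ) ≠ 0 := by exact_mod_cast hc
  rw [intervalIntegral.integral_comp_mul_left Real.cos hc0]
  simp only [mul_zero, integral_cos, Real.sin_zero, sub_zero, smul_eq_mul]
  rw [Real.sin_int_mul_pi c, mul_zero]

lemma node_eq (n : ℕ) (hn : 1 ≤ n) (c : ℤ) (hlt : |c| < 2*n) :
    (1/π) * ∫ θ in Set.Ioo (0:ℝ) π, Real.cos ((c:ℝ)*θ)
      = (1/(n:ℝ)) * ∑ k ∈ Finset.Icc 1 n, Real.cos ((c:ℝ) * ((2*(k:ℝ) - 1) * π / (2*n))) := by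
  rcases eq_or_ne c 0 with rfl | hc
  · simp only [Int.cast_zero, zero_mul, Real.cos_zero]
    rw [MeasureTheory.setIntegral_const, Real.volume_real_Ioo, Finset.sum_const,
      Nat.card_Icc]
    simp only [sub_zero, smul_eq_mul, mul_one, nsmul_eq_mul]
    rw [max_eq_left Real.pi_nonneg]
    have hn0 : (n:ℝ) ≠ 0 := by positivity
    field_simp
    simp
  · rw [integral_cos_int c hc, sum_cos_nodes n hn c hc hlt, mul_zero, mul_zero]

lemma pow_eq (n : ℕ) (hn : 1 ≤ n) (m : ℕ) (hm : m < 2*n) :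
    (1/π) * ∫ θ in Set.Ioo (0:ℝ) π, Real.cos θ ^ m
      = (1/(n:ℝ)) * ∑ k ∈ Finset.Icc 1 n, Real.cos ((2*(k:ℝ) - 1) * π / (2*n)) ^ m := by
  have hcast : ∀ j : ℕ, ∃ c : ℤ, ((c:ℝ) = 2*(j:ℝ) - m) ∧ (j ≤ m → |c| < 2*n) := by
    intro j
    refine ⟨2*j - m, by push_cast; ring, fun hj => ?_⟩
    have : |2*(j:ℤ) - m| ≤ m := by rw [abs_le]; constructor <;> omega
    omega
  -- integrability of each term
  have hint : ∀ c : ℝ, IntegrableOn (fun θ : ℝ => Real.cos (c * θ)) (Set.Ioo 0 π) := by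
    intro c
    exact ((Real.continuous_cos.comp (continuous_const.mul continuous_id))).integrableOn_Icc.mono_set
      Set.Ioo_subset_Icc_self
  have hLHS : ∫ θ in Set.Ioo (0:ℝ) π, Real.cos θ ^ m
      = (1/2^m) * ∑ j ∈ Finset.range (m+1), (m.choose j : ℝ) *
          ∫ θ in Set.Ioo (0:ℝ) π, Real.cos ((2*(j:ℝ) - m) * θ) := by
    simp_rw [cos_pow_expand _ m]
    rw [MeasureTheory.integral_const_mul]
    congr 1
    rw [MeasureTheory.integral_finset_sum]
    · refine Finset.sum_congr rfl fun j _ => ?_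
      rw [MeasureTheory.integral_const_mul]
    · intro j _
      exact ((hint (2*(j:ℝ) - m)).const_mul _)
  have hRHS : ∀ k : ℕ, Real.cos ((2*(k:ℝ) - 1) * π / (2*n)) ^ m
      = (1/2^m) * ∑ j ∈ Finset.range (m+1), (m.choose j : ℝ) *
          Real.cos ((2*(j:ℝ) - m) * ((2*(k:ℝ) - 1) * π / (2*n))) := by
    intro k; exact cos_pow_expand _ m
  simp_rw [hRHS]
  rw [hLHS]
  simp only [Finset.mul_sum]
  rw [Finset.sum_comm]
  refine Finset.sum_congr rfl fun j hj => ?_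
  simp only [Finset.mem_range] at hj
  simp only [← Finset.mul_sum]
  obtain ⟨c, hc1, hc2⟩ := hcast j
  have hbound := hc2 (by omega)
  have hnode := node_eq n hn c hbound
  rw [← hc1]
  linear_combination ((1:ℝ)/2^m * (m.choose j)) * hnode

lemma image_cos_Ioo : Real.cos '' Set.Ioo 0 π = Set.Ioo (-1 : ℝ) 1 := by
  ext x
  constructor
  · rintro ⟨θ, hθ, rfl⟩
    obtain ⟨h0, hπ⟩ := hθ
    constructor
    · have := Real.strictAntiOn_cos (Set.mem_Icc.mpr ⟨le_of_lt h0, le_of_lt (lt_of_lt_of_le hπ le_rfl)⟩)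
        (Set.mem_Icc.mpr ⟨Real.pi_nonneg, le_rfl⟩) hπ
      simpa [Real.cos_pi] using this
    · have := Real.strictAntiOn_cos (Set.mem_Icc.mpr ⟨le_rfl, Real.pi_nonneg⟩)
        (Set.mem_Icc.mpr ⟨le_of_lt h0, le_of_lt hπ⟩) h0
      simpa [Real.cos_zero] using this
  · rintro ⟨h1, h2⟩
    refine ⟨Real.arccos x, ⟨Real.arccos_pos.mpr h2, ?_⟩, Real.cos_arccos h1.le h2.le⟩
    have hle := Real.arccos_le_pi x
    rcases lt_or_eq_of_le hle with h | h
    · exact h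
    · exact absurd (Real.arccos_eq_pi.mp h) (not_le.mpr h1)

lemma subst_cos (g : ℝ → ℝ) :
    ∫ x in Set.Ioo (-1 : ℝ) 1, g x * (π * Real.sqrt (1 - x ^ 2))⁻¹
      = (1/π) * ∫ θ in Set.Ioo (0:ℝ) π, g (Real.cos θ) := by
  rw [← image_cos_Ioo]
  rw [MeasureTheory.integral_image_eq_integral_abs_deriv_smul measurableSet_Ioo
    (f' := fun θ => -Real.sin θ)
    (fun θ _ => (Real.hasDerivAt_cos θ).hasDerivWithinAt)
    (Real.injOn_cos.mono Set.Ioo_subset_Icc_self)]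
  rw [← MeasureTheory.integral_const_mul]
  refine MeasureTheory.setIntegral_congr_fun measurableSet_Ioo fun θ hθ => ?_
  obtain ⟨h0, hπ⟩ := hθ
  have hsin : 0 < Real.sin θ := Real.sin_pos_of_pos_of_lt_pi h0 hπ
  have hsqrt : Real.sqrt (1 - Real.cos θ ^ 2) = Real.sin θ := by
    rw [show (1 : ℝ) - Real.cos θ ^ 2 = Real.sin θ ^ 2 by
      have := Real.sin_sq_add_cos_sq θ; linarith]
    exact Real.sqrt_sq hsin.le
  simp only [smul_eq_mul, abs_neg, abs_of_pos hsin, hsqrt]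
  field_simp

/-- Gauss–Chebyshev quadrature: for every `n ≥ 1` and every real polynomial `f`
of degree at most `2n - 1`,
`∫_{-1}^{1} f(x) / (π √(1-x²)) dx = (1/n) ∑_{k=1}^{n} f(cos((2k-1)π/(2n)))`. -/
theorem gauss_chebyshev_quadrature (n : ℕ) (hn : 1 ≤ n)
    (f : Polynomial ℝ) (hf : f.natDegree ≤ 2 * n - 1) :
    ∫ x in Set.Ioo (-1 : ℝ) 1, f.eval x * (π * Real.sqrt (1 - x ^ 2))⁻¹ =
      (1 / (n : ℝ)) *
        ∑ k ∈ Finset.Icc 1 n, f.eval (Real.cos ((2 * (k : ℝ) - 1) * π / (2 * n))) := by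
  rw [subst_cos (fun x => f.eval x)]
  have hdeg : f.natDegree < 2*n := by omega
  simp_rw [Polynomial.eval_eq_sum_range' hdeg]
  rw [MeasureTheory.integral_finset_sum (f := fun m θ => f.coeff m * Real.cos θ ^ m) _ (fun m _ =>
    ((continuous_const.mul (Real.continuous_cos.pow m)).integrableOn_Icc.mono_set
      Set.Ioo_subset_Icc_self))]
  simp only [MeasureTheory.integral_const_mul, Finset.mul_sum]
  rw [Finset.sum_comm]
  refine Finset.sum_congr rfl fun m hm => ?_
  simp only [Finset.mem_range] at hm
  have hkey := pow_eq n hn m (by omega)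
  simp only [← Finset.mul_sum]
  linear_combination (f.coeff m) * hkey
end

section
/- For every integer n ≥ 1 and every integer k ≥ 0: I^O_n T_k = 0 if n does not divide k; I^O_n T_k = 1/2 if k is an even multiple of n (i.e. k ≡ 0 mod 2n); and I^O_n T_k = −1/2 if k is an odd multiple of n (i.e. k ≡ n mod 2n). -/
open Real

/-- The endpoint weights `ε_j`: `1/2` for `j ∈ {0, n}` and `1` otherwise. -/
noncomputable def chebLobattoWeight (n j : ℕ) : ℝ :=
  if j = 0 ∨ j = n then 1 / 2 else 1

/-- The odd-index part `I^O_n` of the Gauss–Chebyshev–Lobatto quadrature: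
`I^O_n f = (1/n) ∑_{0 ≤ j ≤ n, j odd} ε_j f(cos(jπ/n))`. -/
noncomputable def Iodd (n : ℕ) (f : ℝ → ℝ) : ℝ :=
  (1 / (n : ℝ)) *
    ∑ j ∈ (Finset.range (n + 1)).filter (fun j => Odd j),
      chebLobattoWeight n j * f (Real.cos ((j : ℝ) * π / n))

lemma geo (n k : ℕ) (hn : 1 ≤ n) :
    ∑ m ∈ Finset.range n, Real.cos ((k:ℝ)*(2*(m:ℝ)+1)*π/n) =
      if n ∣ k then (n:ℝ) * (-1:ℝ)^(k/n) else 0 := by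
  have hn0 : (n:ℝ) ≠ 0 := by positivity
  have hnC : (n:ℂ) ≠ 0 := Nat.cast_ne_zero.mpr (by omega)
  set z : ℂ := Complex.exp ((2*(k:ℝ)*π/n : ℝ) * Complex.I) with hz
  set a : ℂ := Complex.exp (((k:ℝ)*π/n : ℝ) * Complex.I) with ha
  have hterm : ∀ m : ℕ, Real.cos ((k:ℝ)*(2*(m:ℝ)+1)*π/n) = (a * z^m).re := by
    intro m
    rw [hz, ha, ← Complex.exp_nat_mul, ← Complex.exp_add]
    have : (((k:ℝ)*π/n : ℝ) : ℂ) * Complex.I + (m:ℕ) * ((((2*(k:ℝ)*π/n : ℝ)) : ℂ) * Complex.I)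
        = (((k:ℝ)*(2*(m:ℝ)+1)*π/n : ℝ) : ℂ) * Complex.I := by
      push_cast; field_simp [hnC]; ring
    rw [this, Complex.exp_ofReal_mul_I_re]
  have hsum : ∑ m ∈ Finset.range n, Real.cos ((k:ℝ)*(2*(m:ℝ)+1)*π/n)
      = (a * ∑ m ∈ Finset.range n, z^m).re := by
    rw [Finset.mul_sum, Complex.re_sum]
    exact Finset.sum_congr rfl fun m _ => hterm m
  have hzn : z^n = 1 := by
    rw [hz, ← Complex.exp_nat_mul]
    have : (n:ℂ) * ((((2*(k:ℝ)*π/n : ℝ)) : ℂ) * Complex.I) = (k:ℤ) * (2*π*Complex.I) := by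
      push_cast; field_simp [hnC]
    rw [this, Complex.exp_int_mul_two_pi_mul_I]
  by_cases hdvd : n ∣ k
  · obtain ⟨d, rfl⟩ := hdvd
    have hd : (n*d)/n = d := by rw [Nat.mul_div_cancel_left _ hn]
    have hz1 : z = 1 := by
      rw [hz]
      have : ((((2*((n*d:ℕ):ℝ)*π/n : ℝ)) : ℂ) * Complex.I) = (d:ℤ) * (2*π*Complex.I) := by
        push_cast; field_simp [hnC]
      rw [this, Complex.exp_int_mul_two_pi_mul_I]
    have haval : a = (-1:ℂ)^d := by
      rw [ha, ← Complex.exp_pi_mul_I, ← Complex.exp_nat_mul]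
      congr 1
      push_cast; field_simp [hnC]
    rw [if_pos ⟨d, rfl⟩, hsum, hz1, hd, haval]
    simp only [one_pow, Finset.sum_const, Finset.card_range, nsmul_eq_mul, mul_one]
    rw [show ((-1:ℂ)^d * (n:ℂ)) = (((-1:ℝ)^d * n : ℝ) : ℂ) by push_cast; ring,
      Complex.ofReal_re]
    ring
  · have hz1 : z ≠ 1 := by
      intro h
      rw [hz] at h
      obtain ⟨m, hm⟩ := Complex.exp_eq_one_iff.mp h
      have hI : ((2*(k:ℝ)*π/n : ℝ) : ℂ) = (m:ℂ) * (2*π) :=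
        mul_right_cancel₀ Complex.I_ne_zero (hm.trans (by ring))
      have hre : (2*(k:ℝ)*π/n : ℝ) = (m:ℝ) * (2*π) := by exact_mod_cast hI
      have hk : (k:ℝ) = (m:ℝ) * n := by
        field_simp at hre
        nlinarith [Real.pi_pos, hre]
      have hkz : (k:ℤ) = m * n := by exact_mod_cast hk
      exact hdvd (Int.natCast_dvd_natCast.mp ⟨m, by rw [hkz]; ring⟩)
    rw [if_neg hdvd, hsum, geom_sum_eq hz1, hzn]
    simp

lemma crefl (n k : ℕ) (hn : 1 ≤ n) (m : ℕ) (hm : m < n) :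
    Real.cos ((k:ℝ)*(((2*(n-1-m)+1 : ℕ)):ℝ)*π/n) = Real.cos ((k:ℝ)*(((2*m+1:ℕ)):ℝ)*π/n) := by
  have hn0 : (n:ℝ) ≠ 0 := by positivity
  have hcast : ((2*(n-1-m)+1 : ℕ):ℝ) = 2*((n:ℝ) - 1 - m)+1 := by
    have h1 : n - 1 - m + (1 + m) = n := by omega
    have : ((n-1-m : ℕ):ℝ) = (n:ℝ) - 1 - m := by
      have := congrArg (fun x : ℕ => (x:ℝ)) h1
      push_cast at this
      linarith
    push_cast [this]
    ring
  rw [hcast]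
  have harg : (k:ℝ)*(2*((n:ℝ) - 1 - m)+1)*π/n = (k:ℝ)*(2*π) - (k:ℝ)*((2*m+1:ℕ):ℝ)*π/n := by
    push_cast
    field_simp
    ring
  rw [harg, Real.cos_nat_mul_two_pi_sub]

lemma two_A (n k : ℕ) (hn : 1 ≤ n) :
    2 * ∑ j ∈ (Finset.range (n + 1)).filter (fun j => Odd j),
        chebLobattoWeight n j * Real.cos ((k:ℝ)*(j:ℝ)*π/n)
      = ∑ m ∈ Finset.range n, Real.cos ((k:ℝ)*(((2*m+1:ℕ)):ℝ)*π/n) := by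
  set F : ℕ → ℝ := fun j => Real.cos ((k:ℝ)*(j:ℝ)*π/n) with hF
  have himg : (Finset.range (n + 1)).filter (fun j => Odd j)
      = (Finset.range ((n+1)/2)).image (fun m => 2*m+1) := by
    ext j
    simp only [Finset.mem_filter, Finset.mem_range, Finset.mem_image, Nat.odd_iff]
    constructor
    · rintro ⟨h1, h2⟩; exact ⟨j/2, by omega, by omega⟩
    · rintro ⟨m, hm, rfl⟩; exact ⟨by omega, by omega⟩
  have hinj : ∀ x ∈ Finset.range ((n+1)/2), ∀ y ∈ Finset.range ((n+1)/2),
      2*x+1 = 2*y+1 → x = y := by intros; omega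
  rw [himg, Finset.sum_image hinj]
  rcases Nat.even_or_odd n with ⟨q, hq⟩ | ⟨q, hq⟩
  · -- n = 2q even
    have hq1 : 1 ≤ q := by omega
    have hhalf : (n+1)/2 = q := by omega
    have hw : ∀ m ∈ Finset.range q, chebLobattoWeight n (2*m+1) * F (2*m+1) = F (2*m+1) := by
      intro m hm
      simp only [Finset.mem_range] at hm
      have : ¬(2*m+1 = 0 ∨ 2*m+1 = n) := by omega
      rw [chebLobattoWeight, if_neg this, one_mul]
    rw [hhalf, Finset.sum_congr rfl hw]
    have hsplit : ∑ m ∈ Finset.range n, F (2*m+1)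
        = ∑ m ∈ Finset.range q, F (2*m+1) + ∑ i ∈ Finset.range q, F (2*(q+i)+1) := by
      rw [show n = q + q by omega, Finset.sum_range_add]
    have hrefl : ∑ i ∈ Finset.range q, F (2*(q+i)+1) = ∑ i ∈ Finset.range q, F (2*i+1) := by
      rw [← Finset.sum_range_reflect (fun i => F (2*(q+i)+1)) q]
      refine Finset.sum_congr rfl fun i hi => ?_
      simp only [Finset.mem_range] at hi
      have h1 : q + (q - 1 - i) = n - 1 - i := by omega
      rw [h1]
      exact crefl n k hn i (by omega)
    rw [hsplit, hrefl]
    ring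
  · -- n = 2q+1 odd
    have hhalf : (n+1)/2 = q + 1 := by omega
    rw [hhalf, Finset.sum_range_succ]
    have hw : ∀ m ∈ Finset.range q, chebLobattoWeight n (2*m+1) * F (2*m+1) = F (2*m+1) := by
      intro m hm
      simp only [Finset.mem_range] at hm
      have : ¬(2*m+1 = 0 ∨ 2*m+1 = n) := by omega
      rw [chebLobattoWeight, if_neg this, one_mul]
    have hwlast : chebLobattoWeight n (2*q+1) = 1/2 := by
      rw [chebLobattoWeight, if_pos (Or.inr (by omega))]
    rw [Finset.sum_congr rfl hw, hwlast]
    have hsplit : ∑ m ∈ Finset.range n, F (2*m+1)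
        = (∑ m ∈ Finset.range q, F (2*m+1) + F (2*q+1))
          + ∑ i ∈ Finset.range q, F (2*(q+1+i)+1) := by
      rw [show n = (q+1) + q by omega, Finset.sum_range_add, Finset.sum_range_succ]
    have hrefl : ∑ i ∈ Finset.range q, F (2*(q+1+i)+1) = ∑ i ∈ Finset.range q, F (2*i+1) := by
      rw [← Finset.sum_range_reflect (fun i => F (2*(q+1+i)+1)) q]
      refine Finset.sum_congr rfl fun i hi => ?_
      simp only [Finset.mem_range] at hi
      have h1 : q + 1 + (q - 1 - i) = n - 1 - i := by omega
      rw [h1]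
      exact crefl n k hn i (by omega)
    rw [hsplit, hrefl]
    ring

/-- Lemma 2.1 (odd part): for `n ≥ 1` and `k ≥ 0`, `I^O_n T_k = 0` if `n ∤ k`,
`I^O_n T_k = 1/2` if `k ≡ 0 (mod 2n)`, and `I^O_n T_k = -1/2` if `k ≡ n (mod 2n)`,
where `T_k` is the Chebyshev polynomial of the first kind of degree `k`. -/
theorem IO_chebyshevT (n : ℕ) (hn : 1 ≤ n) (k : ℕ) :
    (¬ n ∣ k → Iodd n (fun x => (Polynomial.Chebyshev.T ℝ (k : ℤ)).eval x) = 0) ∧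
    (k % (2 * n) = 0 → Iodd n (fun x => (Polynomial.Chebyshev.T ℝ (k : ℤ)).eval x) = 1 / 2) ∧
    (k % (2 * n) = n → Iodd n (fun x => (Polynomial.Chebyshev.T ℝ (k : ℤ)).eval x) = -(1 / 2)) := by

  have hn0 : (n:ℝ) ≠ 0 := by positivity
  have key : Iodd n (fun x => (Polynomial.Chebyshev.T ℝ (k : ℤ)).eval x)
      = (1/(2*(n:ℝ))) * (if n ∣ k then (n:ℝ) * (-1:ℝ)^(k/n) else 0) := by
    rw [Iodd]
    have hT : ∀ j ∈ (Finset.range (n + 1)).filter (fun j => Odd j),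
        chebLobattoWeight n j * (Polynomial.Chebyshev.T ℝ (k : ℤ)).eval (Real.cos ((j:ℝ)*π/n))
          = chebLobattoWeight n j * Real.cos ((k:ℝ)*(j:ℝ)*π/n) := by
      intro j _
      rw [Polynomial.Chebyshev.T_real_cos]
      norm_num
      left
      congr 1
      push_cast
      ring
    rw [Finset.sum_congr rfl hT]
    have h2A := two_A n k hn
    have hgeo := geo n k hn
    have hcast : ∑ m ∈ Finset.range n, Real.cos ((k:ℝ)*(((2*m+1:ℕ)):ℝ)*π/n)
        = ∑ m ∈ Finset.range n, Real.cos ((k:ℝ)*(2*(m:ℝ)+1)*π/n) := by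
      refine Finset.sum_congr rfl fun m _ => ?_
      congr 2
      push_cast
      ring
    rw [hcast, hgeo] at h2A
    have : ∑ j ∈ (Finset.range (n + 1)).filter (fun j => Odd j),
        chebLobattoWeight n j * Real.cos ((k:ℝ)*(j:ℝ)*π/n)
        = (1/2) * (if n ∣ k then (n:ℝ) * (-1:ℝ)^(k/n) else 0) := by linarith
    rw [this]
    ring
  refine ⟨fun h => ?_, fun h => ?_, fun h => ?_⟩
  · rw [key, if_neg h]; ring
  · have hmod := Nat.div_add_mod k (2*n)
    rw [h, Nat.add_zero] at hmod
    obtain ⟨t, ht⟩ : ∃ t, k = 2*n*t := ⟨k/(2*n), hmod.symm⟩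
    have hdvd : n ∣ k := ⟨2*t, by rw [ht]; ring⟩
    have hkd : k / n = 2*t := by subst ht; rw [show 2*n*t = n*(2*t) by ring, Nat.mul_div_cancel_left _ hn]
    rw [key, if_pos hdvd, hkd]
    rw [pow_mul]
    norm_num
    field_simp
  · have hmod := Nat.div_add_mod k (2*n)
    rw [h] at hmod
    obtain ⟨t, ht⟩ : ∃ t, k = 2*n*t + n := ⟨k/(2*n), hmod.symm⟩
    have hdvd : n ∣ k := ⟨2*t+1, by rw [ht]; ring⟩
    have hkd : k / n = 2*t+1 := by
      subst ht; rw [show 2*n*t+n = n*(2*t+1) by ring, Nat.mul_div_cancel_left _ hn]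
    rw [key, if_pos hdvd, hkd]
    rw [pow_succ, pow_mul]
    norm_num
    field_simp
end

section
/- Let n = 2m with m ≥ 1 an integer, d = 3, and let σ ∈ {E,O}^3 be such that not all three coordinates of σ are equal (e.g. σ = (E,E,O), (E,O,E) or (O,E,E)). Then the node set X^σ = (C_n^{σ_1} × C_n^{σ_2} × C_n^{σ_3}) ∪ (C_n^{σ̃_1} × C_n^{σ̃_2} × C_n^{σ̃_3}) has cardinality ((n+1)^3 − (n+1))/4 = m(m+1)(2m+1). -/
open Real

/-- The even-index Chebyshev–Lobatto points `C_n^E = {cos(kπ/n) : 0 ≤ k ≤ n, k even}`. -/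
noncomputable def chebE (n : ℕ) : Finset ℝ :=
  ((Finset.range (n + 1)).filter (fun k => Even k)).image
    (fun k : ℕ => Real.cos ((k : ℝ) * π / n))

/-- The odd-index Chebyshev–Lobatto points `C_n^O = {cos(kπ/n) : 0 ≤ k ≤ n, k odd}`. -/
noncomputable def chebO (n : ℕ) : Finset ℝ :=
  ((Finset.range (n + 1)).filter (fun k => Odd k)).image
    (fun k : ℕ => Real.cos ((k : ℝ) * π / n))

/-- `C_n^{σᵢ}` for `σᵢ ∈ {E, O}` encoded as a `Bool` (`true = E`, `false = O`). -/
noncomputable def chebSub (n : ℕ) (b : Bool) : Finset ℝ :=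
  if b then chebE n else chebO n

lemma injOn_cheb (n : ℕ) (hn : 0 < n) :
    Set.InjOn (fun k : ℕ => Real.cos ((k : ℝ) * π / n)) {k | k < n + 1} := by
  intro a ha b hb hab
  have hπ := Real.pi_pos
  have hnn : (0:ℝ) < n := by exact_mod_cast hn
  have hmem : ∀ k : ℕ, k < n + 1 → (k : ℝ) * π / n ∈ Set.Icc 0 π := by
    intro k hk
    constructor
    · positivity
    · rw [div_le_iff₀ hnn]
      have : (k:ℝ) ≤ n := by exact_mod_cast Nat.lt_succ_iff.mp hk
      nlinarith
  have h := Real.injOn_cos (hmem a ha) (hmem b hb) hab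
  field_simp at h
  exact_mod_cast h

lemma card_chebE (m : ℕ) (hm : 0 < m) : (chebE (2 * m)).card = m + 1 := by
  have hf : (Finset.range (2 * m + 1)).filter (fun k => Even k)
      = (Finset.range (m + 1)).image (fun j => 2 * j) := by
    ext k
    simp only [Finset.mem_filter, Finset.mem_range, Finset.mem_image, Nat.even_iff]
    constructor
    · rintro ⟨h1, h2⟩; exact ⟨k / 2, by omega, by omega⟩
    · rintro ⟨j, hj, rfl⟩; omega
  have hinj : Function.Injective (fun j : ℕ => 2 * j) :=
    fun a b h => by simp only [] at h; omega
  rw [chebE, Finset.card_image_of_injOn, hf,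
    Finset.card_image_of_injective _ hinj, Finset.card_range]
  · exact (injOn_cheb (2 * m) (by omega)).mono (by
      intro k hk
      simp only [Finset.coe_filter, Set.mem_setOf_eq] at hk ⊢
      exact (Finset.mem_range.mp hk.1))

lemma card_chebO (m : ℕ) (hm : 0 < m) : (chebO (2 * m)).card = m := by
  have hf : (Finset.range (2 * m + 1)).filter (fun k => Odd k)
      = (Finset.range m).image (fun j => 2 * j + 1) := by
    ext k
    simp only [Finset.mem_filter, Finset.mem_range, Finset.mem_image, Nat.odd_iff]
    constructor
    · rintro ⟨h1, h2⟩; exact ⟨k / 2, by omega, by omega⟩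
    · rintro ⟨j, hj, rfl⟩; omega
  have hinj : Function.Injective (fun j : ℕ => 2 * j + 1) :=
    fun a b h => by simp only [] at h; omega
  rw [chebO, Finset.card_image_of_injOn, hf,
    Finset.card_image_of_injective _ hinj, Finset.card_range]
  · exact (injOn_cheb (2 * m) (by omega)).mono (by
      intro k hk
      simp only [Finset.coe_filter, Set.mem_setOf_eq] at hk ⊢
      exact (Finset.mem_range.mp hk.1))

lemma disjoint_chebEO (n : ℕ) (hn : 0 < n) : Disjoint (chebE n) (chebO n) := by
  rw [Finset.disjoint_left]
  intro x hxE hxO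
  simp only [chebE, chebO, Finset.mem_image, Finset.mem_filter, Finset.mem_range] at hxE hxO
  obtain ⟨a, ⟨ha, hae⟩, hax⟩ := hxE
  obtain ⟨b, ⟨hb, hbo⟩, hbx⟩ := hxO
  have : a = b := injOn_cheb n hn ha hb (hax.trans hbx.symm)
  subst this
  exact ((Nat.not_odd_iff_even.mpr hae)) hbo

lemma disjoint_chebSub (n : ℕ) (hn : 0 < n) (b : Bool) :
    Disjoint (chebSub n b) (chebSub n (!b)) := by
  cases b <;> simp [chebSub]
  · exact (disjoint_chebEO n hn).symm
  · exact disjoint_chebEO n hn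

/-- For `n = 2m`, `m ≥ 1`, `d = 3` and `σ ∈ {E,O}³` with not all three coordinates
equal (e.g. `σ = (E,E,O), (E,O,E), (O,E,E)`), the node set
`X^σ = (C_n^{σ₁} × C_n^{σ₂} × C_n^{σ₃}) ∪ (C_n^{σ̃₁} × C_n^{σ̃₂} × C_n^{σ̃₃})`
has cardinality `((n+1)³ - (n+1))/4 = m(m+1)(2m+1)`. -/
theorem card_nodes_mixed (m : ℕ) (hm : 1 ≤ m) (n : ℕ) (hn : n = 2 * m)
    (σ₁ σ₂ σ₃ : Bool) (hσ : ¬ (σ₁ = σ₂ ∧ σ₂ = σ₃)) :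
    ((chebSub n σ₁ ×ˢ (chebSub n σ₂ ×ˢ chebSub n σ₃)) ∪
        (chebSub n (!σ₁) ×ˢ (chebSub n (!σ₂) ×ˢ chebSub n (!σ₃)))).card =
      ((n + 1) ^ 3 - (n + 1)) / 4 ∧
    ((n + 1) ^ 3 - (n + 1)) / 4 = m * (m + 1) * (2 * m + 1) := by
  subst hn
  have hn0 : 0 < 2 * m := by omega
  have hd : Disjoint
      (chebSub (2 * m) σ₁ ×ˢ (chebSub (2 * m) σ₂ ×ˢ chebSub (2 * m) σ₃))
      (chebSub (2 * m) (!σ₁) ×ˢ (chebSub (2 * m) (!σ₂) ×ˢ chebSub (2 * m) (!σ₃))) := by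
    rw [Finset.disjoint_left]
    intro p hp hp'
    rw [Finset.mem_product] at hp hp'
    exact Finset.disjoint_left.mp (disjoint_chebSub (2 * m) hn0 σ₁) hp.1 hp'.1
  have hcard : ∀ b : Bool, (chebSub (2 * m) b).card = if b then m + 1 else m := by
    intro b; cases b <;> simp [chebSub, card_chebE m hm, card_chebO m hm]
  have key : (((2 * m) + 1) ^ 3 - ((2 * m) + 1)) = 4 * (m * (m + 1) * (2 * m + 1)) := by
    have h : ((2 * m) + 1) ^ 3 = ((2 * m) + 1) + 4 * (m * (m + 1) * (2 * m + 1)) := by ring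
    omega
  have hdiv : (((2 * m) + 1) ^ 3 - ((2 * m) + 1)) / 4 = m * (m + 1) * (2 * m + 1) := by
    omega
  refine ⟨?_, hdiv⟩
  rw [Finset.card_union_of_disjoint hd, Finset.card_product, Finset.card_product,
    Finset.card_product, Finset.card_product, hcard, hcard, hcard, hcard, hcard, hcard, hdiv]
  cases σ₁ <;> cases σ₂ <;> cases σ₃ <;> simp_all <;> ring
end

section
/- Let Ω ⊂ ℝ^d be compact, μ a finite positive Borel measure on Ω, and {p_α : α ∈ ℕ^d} a family of real d-variate polynomials with deg p_α = |α| such that for every n the set {p_α : |α| ≤ n} is an orthonormal basis of Π_n^d(Ω) in L²(dμ). Suppose that for each n there is a finite node set X_n ⊂ Ω with positive weights w_ξ > 0 such that Σ_{ξ∈X_n} w_ξ q(ξ) = ∫_Ω q dμ for all q ∈ Π_{2n}^d(Ω). Let h ∈ L²(dμ) and define m_α = ∫_Ω h p_α dμ and λ_ξ = w_ξ Σ_{|α|≤n} p_α(ξ) m_α for ξ ∈ X_n. Then lim_{n→∞} Σ_{ξ∈X_n} |λ_ξ| = ∫_Ω |h(x)| dμ. -/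
open Real MeasureTheory Filter

/-- The index set `{α ∈ ℕ^d : |α| ≤ n}`. -/
def idxd (d n : ℕ) : Finset (Fin d → ℕ) :=
  (Fintype.piFinset fun _ : Fin d => Finset.range (n + 1)).filter (fun α => ∑ i, α i ≤ n)

section Aux

variable {d : ℕ} {Ω : Set (Fin d → ℝ)} {μ : Measure (Fin d → ℝ)}

lemma ae_mem_of_compl (hμΩ : μ Ωᶜ = 0) : ∀ᵐ x ∂μ, x ∈ Ω := by
  rw [ae_iff]
  exact hμΩ

lemma memLp2_poly [IsFiniteMeasure μ] (hΩ : IsCompact Ω) (hμΩ : μ Ωᶜ = 0)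
    (q : MvPolynomial (Fin d) ℝ) : MemLp (fun x => MvPolynomial.eval x q) 2 μ := by
  obtain ⟨C, hC⟩ := hΩ.exists_bound_of_continuousOn
    (MvPolynomial.continuous_eval q).continuousOn
  have h1 : ∀ᵐ x ∂μ, ‖MvPolynomial.eval x q‖ ≤ C := by
    filter_upwards [ae_mem_of_compl hμΩ] with x hx using hC x hx
  exact (memLp_top_of_bound (MvPolynomial.continuous_eval q).aestronglyMeasurable C
    h1).mono_exponent le_top

lemma integrable_mul_L2 {α : Type*} [MeasurableSpace α] {μ : Measure α}
    {f g : α → ℝ} (hf : MemLp f 2 μ) (hg : MemLp g 2 μ) :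
    Integrable (fun x => f x * g x) μ := by
  have hm := hf.aestronglyMeasurable.mul hg.aestronglyMeasurable
  refine Integrable.mono' ((hf.integrable_sq.add hg.integrable_sq).div_const 2) hm ?_
  filter_upwards with x
  rw [Real.norm_eq_abs, abs_mul]
  show |f x| * |g x| ≤ (f x ^ 2 + g x ^ 2) / 2
  nlinarith [sq_nonneg (|f x| - |g x|), sq_abs (f x), sq_abs (g x),
    abs_nonneg (f x), abs_nonneg (g x)]

end Aux

section SW

variable {d : ℕ} {Ω : Set (Fin d → ℝ)}

lemma sw_approx (hΩ : IsCompact Ω) {f : (Fin d → ℝ) → ℝ} (hf : Continuous f)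
    {ε : ℝ} (hε : 0 < ε) :
    ∃ q : MvPolynomial (Fin d) ℝ, ∀ x ∈ Ω, |f x - MvPolynomial.eval x q| ≤ ε := by
  haveI : CompactSpace ↥Ω := isCompact_iff_compactSpace.mp hΩ
  set coord : Fin d → C(↥Ω, ℝ) := fun i => ⟨fun z => (z : Fin d → ℝ) i, (continuous_apply i).comp continuous_subtype_val⟩ with hcoord
  set φ : MvPolynomial (Fin d) ℝ →ₐ[ℝ] C(↥Ω, ℝ) := MvPolynomial.aeval coord with hφ
  have hφeval : ∀ q : MvPolynomial (Fin d) ℝ, ∀ z : ↥Ω,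
      φ q z = MvPolynomial.eval (z : Fin d → ℝ) q := by
    intro q
    induction q using MvPolynomial.induction_on with
    | C a => intro z; simp [hφ]
    | add p q hp hq => intro z; simp [map_add, hp z, hq z]
    | mul_X p i hp => intro z; simp [map_mul, hp z, hφ, hcoord]; exact Or.inl (hp z)
  have hsep : (φ.range).SeparatesPoints := by
    intro x y hxy
    obtain ⟨i, hi⟩ := Function.ne_iff.mp (Subtype.coe_injective.ne hxy)
    refine ⟨_, ⟨φ (MvPolynomial.X i), ⟨MvPolynomial.X i, rfl⟩, rfl⟩, ?_⟩
    simpa [hφeval, MvPolynomial.eval_X] using hi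
  obtain ⟨g, hg⟩ := ContinuousMap.exists_mem_subalgebra_near_continuousMap_of_separatesPoints
    φ.range hsep (ContinuousMap.restrict Ω ⟨f, hf⟩) ε hε
  obtain ⟨q, hq⟩ := (AlgHom.mem_range φ).mp g.2
  refine ⟨q, fun x hx => ?_⟩
  have h2 := ContinuousMap.norm_coe_le_norm
    ((g : C(↥Ω, ℝ)) - ContinuousMap.restrict Ω ⟨f, hf⟩) ⟨x, hx⟩
  have h3 : ((g : C(↥Ω, ℝ)) - ContinuousMap.restrict Ω ⟨f, hf⟩) ⟨x, hx⟩
      = MvPolynomial.eval x q - f x := by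
    simp [ContinuousMap.sub_apply, ContinuousMap.restrict_apply, ← hq, hφeval]
  rw [h3] at h2
  rw [abs_sub_comm]
  calc |MvPolynomial.eval x q - f x| ≤ _ := h2
  _ ≤ ε := (le_of_lt hg)

end SW

section Proj

variable {α A : Type*} [MeasurableSpace α] {μ : Measure α} [DecidableEq A]

lemma integral_sq_sub_sum {h : α → ℝ} (hh : MemLp h 2 μ)
    {I : Finset A} {P : A → α → ℝ} (hP : ∀ a ∈ I, MemLp (P a) 2 μ)
    (horth : ∀ a ∈ I, ∀ b ∈ I, ∫ x, P a x * P b x ∂μ = if a = b then 1 else 0)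
    (c : A → ℝ) :
    ∫ x, (h x - ∑ a ∈ I, c a * P a x) ^ 2 ∂μ
      = (∫ x, h x ^ 2 ∂μ) - 2 * ∑ a ∈ I, c a * ∫ x, h x * P a x ∂μ
        + ∑ a ∈ I, (c a) ^ 2 := by
  have hcP : ∀ a ∈ I, MemLp (fun x => c a * P a x) 2 μ := fun a ha =>
    (hP a ha).const_mul (c a)
  have hS : MemLp (fun x => ∑ a ∈ I, c a * P a x) 2 μ :=
    memLp_finset_sum I hcP
  have ihS : Integrable (fun x => h x * ∑ a ∈ I, c a * P a x) μ :=
    integrable_mul_L2 hh hS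
  have iSS : Integrable (fun x => (∑ a ∈ I, c a * P a x) ^ 2) μ := hS.integrable_sq
  have ihh : Integrable (fun x => h x ^ 2) μ := hh.integrable_sq
  have key : (fun x => (h x - ∑ a ∈ I, c a * P a x) ^ 2)
      = fun x => h x ^ 2 - 2 * (h x * ∑ a ∈ I, c a * P a x)
        + (∑ a ∈ I, c a * P a x) ^ 2 := by
    funext x; ring
  have i2 : Integrable (fun x => 2 * (h x * ∑ a ∈ I, c a * P a x)) μ := ihS.const_mul 2
  have i1 : Integrable
      (fun x => h x ^ 2 - 2 * (h x * ∑ a ∈ I, c a * P a x)) μ := ihh.sub i2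
  rw [key, integral_add i1 iSS, integral_sub ihh i2, integral_const_mul]
  have step2 : ∫ x, h x * ∑ a ∈ I, c a * P a x ∂μ
      = ∑ a ∈ I, c a * ∫ x, h x * P a x ∂μ := by
    have e1 : (fun x => h x * ∑ a ∈ I, c a * P a x)
        = fun x => ∑ a ∈ I, c a * (h x * P a x) := by
      funext x; rw [Finset.mul_sum]; exact Finset.sum_congr rfl fun a _ => by ring
    rw [e1, integral_finset_sum I fun a ha =>
      (integrable_mul_L2 hh (hP a ha)).const_mul (c a)]
    exact Finset.sum_congr rfl fun a _ => integral_const_mul _ _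
  have step3 : ∫ x, (∑ a ∈ I, c a * P a x) ^ 2 ∂μ = ∑ a ∈ I, (c a) ^ 2 := by
    have e2 : (fun x => (∑ a ∈ I, c a * P a x) ^ 2)
        = fun x => ∑ a ∈ I, ∑ b ∈ I, (c a * c b) * (P a x * P b x) := by
      funext x
      rw [sq, Finset.sum_mul_sum]
      exact Finset.sum_congr rfl fun a _ => Finset.sum_congr rfl fun b _ => by ring
    rw [e2, integral_finset_sum I fun a ha => ?_]
    · have : ∀ a ∈ I, ∫ x, ∑ b ∈ I, (c a * c b) * (P a x * P b x) ∂μ = (c a) ^ 2 := by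
        intro a ha
        rw [integral_finset_sum I fun b hb =>
          (integrable_mul_L2 (hP a ha) (hP b hb)).const_mul _]
        have : ∀ b ∈ I, ∫ x, (c a * c b) * (P a x * P b x) ∂μ
            = (c a * c b) * if a = b then 1 else 0 := fun b hb => by
          rw [integral_const_mul, horth a ha b hb]
        rw [Finset.sum_congr rfl this]
        simp [mul_ite, Finset.sum_ite_eq, ha, sq]
      exact Finset.sum_congr rfl this
    · exact integrable_finset_sum I fun b hb =>
        (integrable_mul_L2 (hP a ha) (hP b hb)).const_mul _
  rw [step2, step3]

lemma proj_optimal {h : α → ℝ} (hh : MemLp h 2 μ)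
    {I : Finset A} {P : A → α → ℝ} (hP : ∀ a ∈ I, MemLp (P a) 2 μ)
    (horth : ∀ a ∈ I, ∀ b ∈ I, ∫ x, P a x * P b x ∂μ = if a = b then 1 else 0)
    (c : A → ℝ) :
    ∫ x, (h x - ∑ a ∈ I, (∫ y, h y * P a y ∂μ) * P a x) ^ 2 ∂μ
      ≤ ∫ x, (h x - ∑ a ∈ I, c a * P a x) ^ 2 ∂μ := by
  rw [integral_sq_sub_sum hh hP horth c,
    integral_sq_sub_sum hh hP horth (fun a => ∫ y, h y * P a y ∂μ)]
  set m : A → ℝ := fun a => ∫ y, h y * P a y ∂μ with hm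
  have key : 0 ≤ ∑ a ∈ I, (c a - m a) ^ 2 := Finset.sum_nonneg fun a _ => sq_nonneg _
  have expand : ∑ a ∈ I, (c a - m a) ^ 2
      = (∑ a ∈ I, (c a) ^ 2) - 2 * (∑ a ∈ I, c a * m a) + ∑ a ∈ I, (m a) ^ 2 := by
    rw [Finset.mul_sum, ← Finset.sum_sub_distrib, ← Finset.sum_add_distrib]
    exact Finset.sum_congr rfl fun a _ => by ring
  have e4 : ∑ a ∈ I, m a * m a = ∑ a ∈ I, (m a) ^ 2 :=
    Finset.sum_congr rfl fun a _ => (sq (m a)).symm ▸ rfl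
  linarith [key, expand, e4]

end Proj

section Discrete

lemma sum_weight_abs_le {ι : Type*} (X : Finset ι) (w u : ι → ℝ) (hw : ∀ ξ ∈ X, 0 ≤ w ξ)
    {ε : ℝ} (hε : 0 < ε) :
    ∑ ξ ∈ X, w ξ * |u ξ| ≤ (ε * ∑ ξ ∈ X, w ξ + (∑ ξ ∈ X, w ξ * (u ξ) ^ 2) / ε) / 2 := by
  have step : ∀ ξ ∈ X, w ξ * |u ξ| ≤ (ε * w ξ + (w ξ * (u ξ) ^ 2) / ε) / 2 := by
    intro ξ hξ
    have hwξ := hw ξ hξ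
    have h1 : 2 * ε * |u ξ| ≤ ε ^ 2 + (u ξ) ^ 2 := by
      nlinarith [sq_nonneg (ε - |u ξ|), sq_abs (u ξ)]
    have hd : (w ξ * (u ξ) ^ 2) / ε * ε = w ξ * (u ξ) ^ 2 :=
      div_mul_cancel₀ _ (ne_of_gt hε)
    nlinarith [mul_le_mul_of_nonneg_left h1 hwξ, mul_nonneg hwξ (abs_nonneg (u ξ))]
  calc ∑ ξ ∈ X, w ξ * |u ξ| ≤ ∑ ξ ∈ X, (ε * w ξ + (w ξ * (u ξ) ^ 2) / ε) / 2 :=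
        Finset.sum_le_sum step
  _ = (ε * ∑ ξ ∈ X, w ξ + (∑ ξ ∈ X, w ξ * (u ξ) ^ 2) / ε) / 2 := by
      rw [← Finset.sum_div, Finset.sum_add_distrib, ← Finset.mul_sum, ← Finset.sum_div]

lemma integral_abs_le_of_sq {α : Type*} [MeasurableSpace α] {μ : Measure α} [IsFiniteMeasure μ]
    {u : α → ℝ} (hu : MemLp u 2 μ) {ε : ℝ} (hε : 0 < ε) :
    ∫ x, |u x| ∂μ ≤ (ε * (μ Set.univ).toReal + (∫ x, (u x) ^ 2 ∂μ) / ε) / 2 := by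
  have iu : Integrable (fun x => |u x|) μ := (hu.integrable one_le_two).abs
  have iu2 : Integrable (fun x => (u x) ^ 2) μ := hu.integrable_sq
  have hb : ∀ x, |u x| ≤ (ε + (u x) ^ 2 / ε) / 2 := by
    intro x
    have h1 : 2 * ε * |u x| ≤ ε ^ 2 + (u x) ^ 2 := by
      nlinarith [sq_nonneg (ε - |u x|), sq_abs (u x)]
    have hd : (u x) ^ 2 / ε * ε = (u x) ^ 2 := div_mul_cancel₀ _ (ne_of_gt hε)
    nlinarith
  calc ∫ x, |u x| ∂μ ≤ ∫ x, (ε + (u x) ^ 2 / ε) / 2 ∂μ :=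
        integral_mono iu (((integrable_const ε).add (iu2.div_const ε)).div_const 2) hb
  _ = (ε * (μ Set.univ).toReal + (∫ x, (u x) ^ 2 ∂μ) / ε) / 2 := by
      rw [integral_div, integral_add (integrable_const ε) (iu2.div_const ε),
        integral_const, integral_div, smul_eq_mul]
      simp only [measureReal_def]
      ring

end Discrete

set_option maxHeartbeats 1000000 in
/-- Theorem 4.1 (from [SVZ]): let `Ω ⊂ ℝ^d` be compact, `μ` a finite positive Borel
measure on `Ω`, `{p_α}` polynomials with `deg p_α = |α|` forming, for each `n`, an
orthonormal basis of `Π_n^d(Ω)` in `L²(dμ)`, and for each `n` a cubature formula with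
nodes `X_n ⊂ Ω` and positive weights exact on `Π_{2n}^d(Ω)`. For `h ∈ L²(dμ)` set
`m_α = ∫_Ω h p_α dμ` and `λ_ξ = w_ξ ∑_{|α|≤n} p_α(ξ) m_α`. Then
`lim_{n→∞} ∑_{ξ∈X_n} |λ_ξ| = ∫_Ω |h| dμ`. -/
theorem sum_abs_weights_tendsto (d : ℕ) (hd : 1 ≤ d)
    (Ω : Set (Fin d → ℝ)) (hΩ : IsCompact Ω)
    (μ : Measure (Fin d → ℝ)) [IsFiniteMeasure μ] (hμΩ : μ Ωᶜ = 0)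
    (p : (Fin d → ℕ) → MvPolynomial (Fin d) ℝ)
    (hdeg : ∀ α, (p α).totalDegree = ∑ i, α i)
    (horth : ∀ α β, ∫ x, MvPolynomial.eval x (p α) * MvPolynomial.eval x (p β) ∂μ =
      if α = β then 1 else 0)
    (hspan : ∀ n : ℕ, ∀ q : MvPolynomial (Fin d) ℝ, q.totalDegree ≤ n →
      ∃ c : (Fin d → ℕ) → ℝ, ∀ x ∈ Ω,
        MvPolynomial.eval x q = ∑ α ∈ idxd d n, c α * MvPolynomial.eval x (p α))
    (X : ℕ → Finset (Fin d → ℝ)) (hXΩ : ∀ n, ∀ ξ ∈ X n, ξ ∈ Ω)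
    (w : ℕ → (Fin d → ℝ) → ℝ) (hw : ∀ n, ∀ ξ ∈ X n, 0 < w n ξ)
    (hexact : ∀ n : ℕ, ∀ q : MvPolynomial (Fin d) ℝ, q.totalDegree ≤ 2 * n →
      ∑ ξ ∈ X n, w n ξ * MvPolynomial.eval ξ q = ∫ x, MvPolynomial.eval x q ∂μ)
    (h : (Fin d → ℝ) → ℝ) (hh : MemLp h 2 μ) :
    Tendsto (fun n : ℕ =>
        ∑ ξ ∈ X n, |w n ξ * ∑ α ∈ idxd d n,
          MvPolynomial.eval ξ (p α) * ∫ x, h x * MvPolynomial.eval x (p α) ∂μ|)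
      atTop (nhds (∫ x, |h x| ∂μ)) := by
  classical
  set m : (Fin d → ℕ) → ℝ := fun α => ∫ x, h x * MvPolynomial.eval x (p α) ∂μ with hm
  set P : ℕ → MvPolynomial (Fin d) ℝ :=
    fun n => ∑ α ∈ idxd d n, MvPolynomial.C (m α) * p α with hP
  set M : ℝ := (μ Set.univ).toReal with hMdef
  set L : ℝ := ∫ x, |h x| ∂μ with hL
  have hM0 : 0 ≤ M := ENNReal.toReal_nonneg
  have haΩ : ∀ᵐ x ∂μ, x ∈ Ω := ae_mem_of_compl hμΩ
  have memP : ∀ q : MvPolynomial (Fin d) ℝ, MemLp (fun x => MvPolynomial.eval x q) 2 μ :=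
    memLp2_poly hΩ hμΩ
  have hW : ∀ n, ∑ ξ ∈ X n, w n ξ = M := by
    intro n
    have h1 := hexact n 1 (by simp)
    simpa [hMdef, smul_eq_mul, measureReal_def] using h1
  have degP : ∀ n, (P n).totalDegree ≤ n := by
    intro n
    refine (MvPolynomial.totalDegree_finset_sum _ _).trans (Finset.sup_le fun α hα => ?_)
    have hαn : ∑ i, α i ≤ n := (Finset.mem_filter.mp hα).2
    exact le_trans (MvPolynomial.totalDegree_mul _ _)
      (by simp [MvPolynomial.totalDegree_C, hdeg α, hαn])
  have evalP : ∀ n x, MvPolynomial.eval x (P n)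
      = ∑ α ∈ idxd d n, m α * MvPolynomial.eval x (p α) := by
    intro n x; simp [hP]
  have target_eq : ∀ n, (∑ ξ ∈ X n, |w n ξ * ∑ α ∈ idxd d n,
      MvPolynomial.eval ξ (p α) * m α|)
      = ∑ ξ ∈ X n, w n ξ * |MvPolynomial.eval ξ (P n)| := by
    intro n
    refine Finset.sum_congr rfl fun ξ hξ => ?_
    rw [abs_mul, abs_of_pos (hw n ξ hξ), evalP]
    congr 2
    exact Finset.sum_congr rfl fun α _ => mul_comm _ _
  have key : ∀ ε : ℝ, 0 < ε → ∃ N : ℕ, ∀ n ≥ N,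
      |(∑ ξ ∈ X n, w n ξ * |MvPolynomial.eval ξ (P n)|) - L| ≤ ε * (8 * M + 5) := by
    intro ε hε
    have h12 : (1:ENNReal) ≤ 2 := by norm_num
    -- bounded continuous approximation of h in L²
    have hh' : MemLp h (ENNReal.ofReal 2) μ := by
      simpa [ENNReal.ofReal_ofNat] using hh
    obtain ⟨g, hg, hgm⟩ := hh'.exists_boundedContinuous_integral_rpow_sub_le two_pos
      (show (0:ℝ) < ε ^ 2 by positivity)
    have hgm2 : MemLp (⇑g) 2 μ := by simpa [ENNReal.ofReal_ofNat] using hgm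
    have hg2 : ∫ x, (h x - g x) ^ 2 ∂μ ≤ ε ^ 2 := by
      have e : ∀ x : Fin d → ℝ, ‖h x - g x‖ ^ (2:ℝ) = (h x - g x) ^ 2 := fun x => by
        rw [show (2:ℝ) = ((2:ℕ):ℝ) by norm_num, Real.rpow_natCast, Real.norm_eq_abs, sq_abs]
      simpa only [e] using hg
    -- polynomial approximation of g on Ω
    obtain ⟨Q, hQ⟩ := sw_approx hΩ g.continuous hε
    set Qh : (Fin d → ℝ) → ℝ := fun x => MvPolynomial.eval x Q with hQh
    have hQmem : MemLp Qh 2 μ := memP Q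
    have ihQ2 : Integrable (fun x => (h x - Qh x) ^ 2) μ := (hh.sub hQmem).integrable_sq
    have ihg2 : Integrable (fun x => (h x - g x) ^ 2) μ := (hh.sub hgm2).integrable_sq
    have hE : ∫ x, (h x - Qh x) ^ 2 ∂μ ≤ 2 * ε ^ 2 * (1 + M) := by
      have hb : ∀ᵐ x ∂μ, (h x - Qh x) ^ 2 ≤ 2 * (h x - g x) ^ 2 + 2 * ε ^ 2 := by
        filter_upwards [haΩ] with x hx
        have h1 := hQ x hx
        have h2 : (g x - Qh x) ^ 2 ≤ ε ^ 2 := by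
          nlinarith [abs_nonneg (g x - Qh x), sq_abs (g x - Qh x)]
        nlinarith [sq_nonneg ((h x - g x) - (g x - Qh x))]
      calc ∫ x, (h x - Qh x) ^ 2 ∂μ ≤ ∫ x, 2 * (h x - g x) ^ 2 + 2 * ε ^ 2 ∂μ :=
            integral_mono_ae ihQ2 ((ihg2.const_mul 2).add (integrable_const _)) hb
      _ = 2 * (∫ x, (h x - g x) ^ 2 ∂μ) + 2 * ε ^ 2 * M := by
            rw [integral_add (ihg2.const_mul 2) (integrable_const _), integral_const_mul,
              integral_const, smul_eq_mul, measureReal_def, ← hMdef]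
            ring
      _ ≤ 2 * ε ^ 2 * (1 + M) := by nlinarith
    -- polynomial approximation of |Qh| on Ω
    obtain ⟨R, hR⟩ := sw_approx hΩ (continuous_abs.comp (MvPolynomial.continuous_eval Q)) hε
    refine ⟨max Q.totalDegree R.totalDegree, fun n hn => ?_⟩
    have hQn : Q.totalDegree ≤ n := le_trans (le_max_left _ _) hn
    have hRn : R.totalDegree ≤ n := le_trans (le_max_right _ _) hn
    obtain ⟨c, hc⟩ := hspan n Q hQn
    have horth' : ∀ α ∈ idxd d n, ∀ β ∈ idxd d n,
        ∫ x, MvPolynomial.eval x (p α) * MvPolynomial.eval x (p β) ∂μ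
          = if α = β then 1 else 0 := fun α _ β _ => horth α β
    have hPmem : ∀ α ∈ idxd d n, MemLp (fun x => MvPolynomial.eval x (p α)) 2 μ :=
      fun α _ => memP (p α)
    -- projection optimality
    have hproj : ∫ x, (h x - MvPolynomial.eval x (P n)) ^ 2 ∂μ
        ≤ ∫ x, (h x - Qh x) ^ 2 ∂μ := by
      have h1 := proj_optimal hh hPmem horth' c
      have e1 : (fun x => (h x - MvPolynomial.eval x (P n)) ^ 2)
          = fun x => (h x - ∑ α ∈ idxd d n,
              (∫ y, h y * MvPolynomial.eval y (p α) ∂μ) * MvPolynomial.eval x (p α)) ^ 2 := by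
        funext x
        rw [evalP n x]
      have e2 : ∫ x, (h x - ∑ α ∈ idxd d n, c α * MvPolynomial.eval x (p α)) ^ 2 ∂μ
          = ∫ x, (h x - Qh x) ^ 2 ∂μ := by
        refine integral_congr_ae ?_
        filter_upwards [haΩ] with x hx
        simp only [hQh]
        rw [← hc x hx]
      calc ∫ x, (h x - MvPolynomial.eval x (P n)) ^ 2 ∂μ
          = ∫ x, (h x - ∑ α ∈ idxd d n,
              (∫ y, h y * MvPolynomial.eval y (p α) ∂μ)
                * MvPolynomial.eval x (p α)) ^ 2 ∂μ := by rw [e1]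
      _ ≤ ∫ x, (h x - ∑ α ∈ idxd d n, c α * MvPolynomial.eval x (p α)) ^ 2 ∂μ := h1
      _ = ∫ x, (h x - Qh x) ^ 2 ∂μ := e2
    -- cubature applied to (P n - Q)^2
    have hdegPQ : (P n - Q).totalDegree ≤ n :=
      le_trans (MvPolynomial.totalDegree_sub _ _) (max_le (degP n) hQn)
    have hdeg2 : ((P n - Q) ^ 2).totalDegree ≤ 2 * n := by
      rw [sq]
      exact le_trans (MvPolynomial.totalDegree_mul _ _) (by omega)
    have hDint : ∑ ξ ∈ X n, w n ξ * (MvPolynomial.eval ξ (P n) - Qh ξ) ^ 2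
        = ∫ x, (MvPolynomial.eval x (P n) - Qh x) ^ 2 ∂μ := by
      have h1 := hexact n ((P n - Q) ^ 2) hdeg2
      simpa only [map_pow, map_sub, hQh] using h1
    have hPQmem : MemLp (fun x => MvPolynomial.eval x (P n) - Qh x) 2 μ :=
      (memP (P n)).sub hQmem
    have iPQ2 : Integrable (fun x => (MvPolynomial.eval x (P n) - Qh x) ^ 2) μ :=
      hPQmem.integrable_sq
    have ihP2 : Integrable (fun x => (h x - MvPolynomial.eval x (P n)) ^ 2) μ :=
      (hh.sub (memP (P n))).integrable_sq
    have hD : ∫ x, (MvPolynomial.eval x (P n) - Qh x) ^ 2 ∂μ ≤ 8 * ε ^ 2 * (1 + M) := by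
      have hb : ∀ x, (MvPolynomial.eval x (P n) - Qh x) ^ 2
          ≤ 2 * (h x - MvPolynomial.eval x (P n)) ^ 2 + 2 * (h x - Qh x) ^ 2 := fun x => by
        nlinarith [sq_nonneg ((h x - MvPolynomial.eval x (P n)) + (h x - Qh x))]
      calc ∫ x, (MvPolynomial.eval x (P n) - Qh x) ^ 2 ∂μ
          ≤ ∫ x, 2 * (h x - MvPolynomial.eval x (P n)) ^ 2 + 2 * (h x - Qh x) ^ 2 ∂μ :=
            integral_mono iPQ2 ((ihP2.const_mul 2).add (ihQ2.const_mul 2)) hb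
      _ = 2 * (∫ x, (h x - MvPolynomial.eval x (P n)) ^ 2 ∂μ)
            + 2 * (∫ x, (h x - Qh x) ^ 2 ∂μ) := by
            rw [integral_add (ihP2.const_mul 2) (ihQ2.const_mul 2), integral_const_mul,
              integral_const_mul]
      _ ≤ 8 * ε ^ 2 * (1 + M) := by nlinarith
    -- T1 : node sum of |P n - Q|
    have hT1 : ∑ ξ ∈ X n, w n ξ * |MvPolynomial.eval ξ (P n) - Qh ξ|
        ≤ (ε * M + (8 * ε ^ 2 * (1 + M)) / ε) / 2 := by
      have h1 := sum_weight_abs_le (X n) (w n)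
        (fun ξ => MvPolynomial.eval ξ (P n) - Qh ξ) (fun ξ hξ => (hw n ξ hξ).le) hε
      rw [hW n, hDint] at h1
      refine h1.trans ?_
      have h2 : (∫ x, (MvPolynomial.eval x (P n) - Qh x) ^ 2 ∂μ) / ε
          ≤ (8 * ε ^ 2 * (1 + M)) / ε := by gcongr
      linarith
    -- membership / integrability for |Qh|
    have imem : MemLp (fun x => |Qh x|) 2 μ := by
      simpa [Real.norm_eq_abs] using hQmem.norm
    have iabs : Integrable (fun x => |Qh x|) μ := imem.integrable h12
    have iR : Integrable (fun x => MvPolynomial.eval x R) μ :=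
      (memP R).integrable h12
    have hR' : ∀ x ∈ Ω, |(|Qh x|) - MvPolynomial.eval x R| ≤ ε := by
      intro x hx
      have h1 := hR x hx
      simpa [Function.comp, hQh] using h1
    -- T2 : cubature sum of |Qh| close to ∫ |Qh|
    have hT2 : |(∑ ξ ∈ X n, w n ξ * |Qh ξ|) - ∫ x, |Qh x| ∂μ| ≤ 2 * ε * M := by
      have hRex : ∑ ξ ∈ X n, w n ξ * MvPolynomial.eval ξ R
          = ∫ x, MvPolynomial.eval x R ∂μ := hexact n R (by omega)
      have hnode : |∑ ξ ∈ X n, (w n ξ * |Qh ξ| - w n ξ * MvPolynomial.eval ξ R)| ≤ ε * M := by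
        calc |∑ ξ ∈ X n, (w n ξ * |Qh ξ| - w n ξ * MvPolynomial.eval ξ R)|
            ≤ ∑ ξ ∈ X n, |w n ξ * |Qh ξ| - w n ξ * MvPolynomial.eval ξ R| :=
              Finset.abs_sum_le_sum_abs _ _
        _ ≤ ∑ ξ ∈ X n, w n ξ * ε := by
            refine Finset.sum_le_sum fun ξ hξ => ?_
            rw [← mul_sub, abs_mul, abs_of_pos (hw n ξ hξ)]
            exact mul_le_mul_of_nonneg_left (hR' ξ (hXΩ n ξ hξ)) (hw n ξ hξ).le
        _ = ε * M := by rw [← Finset.sum_mul, hW n, mul_comm]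
      have hint : |(∫ x, MvPolynomial.eval x R ∂μ) - ∫ x, |Qh x| ∂μ| ≤ ε * M := by
        rw [← integral_sub iR iabs]
        calc |∫ x, (MvPolynomial.eval x R - |Qh x|) ∂μ|
            ≤ ∫ x, |MvPolynomial.eval x R - (|Qh x|)| ∂μ := by
              simpa [Real.norm_eq_abs] using norm_integral_le_integral_norm
                (μ := μ) (f := fun x => MvPolynomial.eval x R - |Qh x|)
        _ ≤ ∫ _x, ε ∂μ := by
              refine integral_mono_ae ((iR.sub iabs).abs) (integrable_const ε) ?_
              filter_upwards [haΩ] with x hx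
              rw [abs_sub_comm]
              exact hR' x hx
        _ = ε * M := by rw [integral_const, smul_eq_mul, mul_comm, measureReal_def, ← hMdef]
      have hsplit : (∑ ξ ∈ X n, w n ξ * |Qh ξ|) - ∫ x, |Qh x| ∂μ
          = (∑ ξ ∈ X n, (w n ξ * |Qh ξ| - w n ξ * MvPolynomial.eval ξ R))
            + ((∫ x, MvPolynomial.eval x R ∂μ) - ∫ x, |Qh x| ∂μ) := by
        rw [Finset.sum_sub_distrib, hRex]
        ring
      rw [hsplit]
      calc |(∑ ξ ∈ X n, (w n ξ * |Qh ξ| - w n ξ * MvPolynomial.eval ξ R))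
            + ((∫ x, MvPolynomial.eval x R ∂μ) - ∫ x, |Qh x| ∂μ)|
          ≤ |∑ ξ ∈ X n, (w n ξ * |Qh ξ| - w n ξ * MvPolynomial.eval ξ R)|
            + |(∫ x, MvPolynomial.eval x R ∂μ) - ∫ x, |Qh x| ∂μ| := abs_add_le _ _
      _ ≤ 2 * ε * M := by linarith
    -- T3 : ∫ |Qh| close to ∫ |h|
    have i2 : Integrable (fun x => |h x|) μ := (hh.integrable h12).abs
    have hT3 : |(∫ x, |Qh x| ∂μ) - L| ≤ (ε * M + (2 * ε ^ 2 * (1 + M)) / ε) / 2 := by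
      rw [hL, ← integral_sub iabs i2]
      have hsub0 : MemLp (fun x => Qh x - h x) 2 μ := hQmem.sub hh
      have iQh : Integrable (fun x => |Qh x - h x|) μ :=
        (hsub0.integrable h12).abs
      calc |∫ x, (|Qh x| - |h x|) ∂μ|
          ≤ ∫ x, |(|Qh x|) - (|h x|)| ∂μ := by
            simpa [Real.norm_eq_abs] using norm_integral_le_integral_norm
              (μ := μ) (f := fun x => |Qh x| - |h x|)
      _ ≤ ∫ x, |Qh x - h x| ∂μ :=
            integral_mono (iabs.sub i2).abs iQh fun x => abs_abs_sub_abs_le_abs_sub _ _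
      _ ≤ (ε * M + (∫ x, (Qh x - h x) ^ 2 ∂μ) / ε) / 2 := by
            have hsub : MemLp (fun x => Qh x - h x) 2 μ := hQmem.sub hh
            simpa [hMdef] using integral_abs_le_of_sq hsub hε
      _ ≤ (ε * M + (2 * ε ^ 2 * (1 + M)) / ε) / 2 := by
            have e : (fun x => (Qh x - h x) ^ 2) = fun x => (h x - Qh x) ^ 2 := by
              funext x; ring
            rw [e]
            have h2 : (∫ x, (h x - Qh x) ^ 2 ∂μ) / ε ≤ (2 * ε ^ 2 * (1 + M)) / ε := by gcongr
            linarith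
    -- triangle: node sums of |P n| vs |Qh|
    have tri1 : |(∑ ξ ∈ X n, w n ξ * |MvPolynomial.eval ξ (P n)|)
        - (∑ ξ ∈ X n, w n ξ * |Qh ξ|)| ≤ (ε * M + (8 * ε ^ 2 * (1 + M)) / ε) / 2 := by
      rw [← Finset.sum_sub_distrib]
      calc |∑ ξ ∈ X n, (w n ξ * |MvPolynomial.eval ξ (P n)| - w n ξ * |Qh ξ|)|
          ≤ ∑ ξ ∈ X n, |w n ξ * (|MvPolynomial.eval ξ (P n)|) - w n ξ * (|Qh ξ|)| :=
            Finset.abs_sum_le_sum_abs _ _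
      _ ≤ ∑ ξ ∈ X n, w n ξ * |MvPolynomial.eval ξ (P n) - Qh ξ| := by
            refine Finset.sum_le_sum fun ξ hξ => ?_
            rw [← mul_sub, abs_mul, abs_of_pos (hw n ξ hξ)]
            exact mul_le_mul_of_nonneg_left
              (abs_abs_sub_abs_le_abs_sub _ _) (hw n ξ hξ).le
      _ ≤ _ := hT1
    -- combine all three
    have e8 : (8 * ε ^ 2 * (1 + M)) / ε = 8 * ε * (1 + M) := by
      field_simp
    have e2' : (2 * ε ^ 2 * (1 + M)) / ε = 2 * ε * (1 + M) := by
      field_simp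
    rw [e8] at tri1
    rw [e2'] at hT3
    have t1 := abs_sub_le (∑ ξ ∈ X n, w n ξ * |MvPolynomial.eval ξ (P n)|)
      (∑ ξ ∈ X n, w n ξ * |Qh ξ|) L
    have t2 := abs_sub_le (∑ ξ ∈ X n, w n ξ * |Qh ξ|) (∫ x, |Qh x| ∂μ) L
    linarith

  -- conclusion from `key`
  have funeq : (fun n : ℕ => ∑ ξ ∈ X n, |w n ξ * ∑ α ∈ idxd d n,
      MvPolynomial.eval ξ (p α) * m α|)
      = fun n => ∑ ξ ∈ X n, w n ξ * |MvPolynomial.eval ξ (P n)| := funext target_eq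
  show Tendsto (fun n : ℕ => ∑ ξ ∈ X n, |w n ξ * ∑ α ∈ idxd d n,
      MvPolynomial.eval ξ (p α) * m α|) atTop (nhds L)
  rw [funeq, Metric.tendsto_atTop]
  intro δ hδ
  obtain ⟨N, hN⟩ := key (δ / (8 * M + 6)) (by positivity)
  refine ⟨N, fun n hn => ?_⟩
  rw [Real.dist_eq]
  calc |(∑ ξ ∈ X n, w n ξ * |MvPolynomial.eval ξ (P n)|) - L|
      ≤ δ / (8 * M + 6) * (8 * M + 5) := hN n hn
  _ < δ := by
      rw [div_mul_eq_mul_div, div_lt_iff₀ (by positivity)]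
      nlinarith
end
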